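/- Let V and W be finite-dimensional real inner product spaces with inner products induced by SPD matrices A (on V) and 𝒜 (on W). Suppose Π : W → V and I : V → W are linear maps such that Π ∘ I = id_V and Iᵀ 𝒜 I = A. If there exist positive constants α, β with α⁻¹ ⟨𝒜 w, w⟩ ≤ ⟨ℬ w, w⟩ ≤ β ⟨𝒜 w, w⟩ for all w in a subspace W̃ ⊆ W containing Range(I), ℬ being SPD on W̃, and Π is continuous on W̃ in the sense ⟨A Π w, Π w⟩ ≤ c ⟨𝒜 w, w⟩ for all w ∈ W̃ with constant c > 0, then the fictitious space preconditioner B̂⁻¹ := Π ℬ⁻¹ Πᵀ (with ℬ⁻¹ the inverse of ℬ on W̃) satisfies the spectral equivalence: ⟨B̂ v, v⟩ ≤ β ⟨A v, v⟩ and ⟨A v, v⟩ ≤ c α ⟨B̂ v, v⟩ for all v ∈ V. -/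

import Mathlib

open Matrix

lemma symm_dot {k : ℕ} {X : Matrix (Fin k) (Fin k) ℝ} (h : Xᵀ = X) (a b : Fin k → ℝ) :
    a ⬝ᵥ X *ᵥ b = (X *ᵥ a) ⬝ᵥ b := by
  rw [Matrix.dotProduct_mulVec, ← Matrix.vecMul_transpose, h]

lemma cs_sub {k : ℕ} {X : Matrix (Fin k) (Fin k) ℝ} (h : Xᵀ = X)
    (S : Submodule ℝ (Fin k → ℝ)) (hpos : ∀ x ∈ S, 0 ≤ x ⬝ᵥ X *ᵥ x)
    {a b : Fin k → ℝ} (ha : a ∈ S) (hb : b ∈ S) :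
    (a ⬝ᵥ X *ᵥ b) ^ 2 ≤ (a ⬝ᵥ X *ᵥ a) * (b ⬝ᵥ X *ᵥ b) := by
  have key : ∀ t : ℝ, 0 ≤ (b ⬝ᵥ X *ᵥ b) * (t * t) + (2 * (a ⬝ᵥ X *ᵥ b)) * t + (a ⬝ᵥ X *ᵥ a) := by
    intro t
    have h0 := hpos (a + t • b) (S.add_mem ha (S.smul_mem t hb))
    have hba : b ⬝ᵥ X *ᵥ a = a ⬝ᵥ X *ᵥ b := by
      rw [symm_dot h, dotProduct_comm]
    have hexp : (a + t • b) ⬝ᵥ X *ᵥ (a + t • b)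
        = (b ⬝ᵥ X *ᵥ b) * (t * t) + (2 * (a ⬝ᵥ X *ᵥ b)) * t + (a ⬝ᵥ X *ᵥ a) := by
      simp [Matrix.mulVec_add, Matrix.mulVec_smul, dotProduct_add, add_dotProduct,
        dotProduct_smul, smul_dotProduct, smul_eq_mul, hba]
      ring
    linarith [hexp ▸ h0]
  have hd := discrim_le_zero key
  rw [discrim] at hd
  nlinarith [hd]

lemma inv_antitone {k : ℕ} {X Y : Matrix (Fin k) (Fin k) ℝ}
    (hX : X.PosDef) (hY : Y.PosDef) (t : ℝ) (ht : 0 < t)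
    (h : ∀ v, v ⬝ᵥ X *ᵥ v ≤ t * (v ⬝ᵥ Y *ᵥ v)) :
    ∀ v, v ⬝ᵥ Y⁻¹ *ᵥ v ≤ t * (v ⬝ᵥ X⁻¹ *ᵥ v) := by
  intro v
  have hXsym : Xᵀ = X := by
    have := hX.1
    rwa [Matrix.IsHermitian, Matrix.conjTranspose_eq_transpose_of_trivial] at this
  have hXpos : ∀ x : Fin k → ℝ, 0 ≤ x ⬝ᵥ X *ᵥ x := fun x => by
    have := hX.posSemidef.dotProduct_mulVec_nonneg x
    simpa using this
  have hXinv : X *ᵥ (X⁻¹ *ᵥ v) = v := by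
    rw [Matrix.mulVec_mulVec, Matrix.mul_nonsing_inv _ hX.det_pos.ne'.isUnit, Matrix.one_mulVec]
  set u := Y⁻¹ *ᵥ v with hu
  have hYu : Y *ᵥ u = v := by
    rw [hu, Matrix.mulVec_mulVec, Matrix.mul_nonsing_inv _ hY.det_pos.ne'.isUnit, Matrix.one_mulVec]
  have hvu : v ⬝ᵥ Y⁻¹ *ᵥ v = v ⬝ᵥ u := rfl
  -- s := v ⬝ᵥ u
  have hYsym : Yᵀ = Y := by
    have := hY.1
    rwa [Matrix.IsHermitian, Matrix.conjTranspose_eq_transpose_of_trivial] at this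
  have hs_eq : v ⬝ᵥ u = u ⬝ᵥ Y *ᵥ u := by
    rw [symm_dot hYsym u u, hYu, dotProduct_comm]
  have hs_nonneg : 0 ≤ v ⬝ᵥ u := by
    rw [hs_eq]
    have := hY.posSemidef.dotProduct_mulVec_nonneg u
    simpa using this
  have hXi_nonneg : 0 ≤ v ⬝ᵥ X⁻¹ *ᵥ v := by
    have := hX.inv.posSemidef.dotProduct_mulVec_nonneg v
    simpa using this
  rcases eq_or_lt_of_le hs_nonneg with hz | hz
  · rw [hvu, ← hz]; positivity
  · -- Cauchy-Schwarz
    have cs := cs_sub hXsym ⊤ (fun x _ => hXpos x) (a := X⁻¹ *ᵥ v) (b := u) trivial trivial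
    have e1 : (X⁻¹ *ᵥ v) ⬝ᵥ X *ᵥ u = v ⬝ᵥ u := by
      rw [symm_dot hXsym _ u, hXinv]
    have e2 : (X⁻¹ *ᵥ v) ⬝ᵥ X *ᵥ (X⁻¹ *ᵥ v) = v ⬝ᵥ X⁻¹ *ᵥ v := by
      rw [hXinv, dotProduct_comm]
    rw [e1, e2] at cs
    have hu2 : u ⬝ᵥ X *ᵥ u ≤ t * (v ⬝ᵥ u) := by
      calc u ⬝ᵥ X *ᵥ u ≤ t * (u ⬝ᵥ Y *ᵥ u) := h u
        _ = t * (v ⬝ᵥ u) := by rw [← hs_eq]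
    rw [hvu]
    nlinarith [cs, hu2, hz]

lemma binv_left {m : ℕ} (B Binv : Matrix (Fin m) (Fin m) ℝ) (Wt : Submodule ℝ (Fin m → ℝ))
    (hBinvRange : ∀ v : Fin m → ℝ, Binv *ᵥ v ∈ Wt)
    (hBinv : ∀ w ∈ Wt, B *ᵥ (Binv *ᵥ w) = w) :
    ∀ x ∈ Wt, Binv *ᵥ (B *ᵥ x) = x := by
  let T : Wt →ₗ[ℝ] Wt :=
    { toFun := fun x => ⟨Binv *ᵥ (x : Fin m → ℝ), hBinvRange x⟩
      map_add' := fun x y => by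
        ext i
        simp [Matrix.mulVec_add]
      map_smul' := fun r x => by
        ext i
        simp [Matrix.mulVec_smul] }
  have hinj : Function.Injective T := by
    intro x y hxy
    have h1 : Binv *ᵥ (x : Fin m → ℝ) = Binv *ᵥ (y : Fin m → ℝ) := congrArg Subtype.val hxy
    have h2 : B *ᵥ (Binv *ᵥ (x : Fin m → ℝ)) = B *ᵥ (Binv *ᵥ (y : Fin m → ℝ)) := by rw [h1]
    rw [hBinv _ x.2, hBinv _ y.2] at h2
    exact Subtype.ext h2
  have hsurj : Function.Surjective T := (LinearMap.injective_iff_surjective).mp hinj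
  intro x hx
  obtain ⟨y, hy⟩ := hsurj ⟨x, hx⟩
  have hy' : Binv *ᵥ (y : Fin m → ℝ) = x := congrArg Subtype.val hy
  have hBx : B *ᵥ x = (y : Fin m → ℝ) := by
    rw [← hy', hBinv _ y.2]
  rw [hBx, hy']

lemma pullback {n m : ℕ} (J : Matrix (Fin m) (Fin n) ℝ) (𝒜 : Matrix (Fin m) (Fin m) ℝ)
    (x : Fin n → ℝ) :
    (J *ᵥ x) ⬝ᵥ 𝒜 *ᵥ (J *ᵥ x) = x ⬝ᵥ (Jᵀ * 𝒜 * J) *ᵥ x := by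
  calc (J *ᵥ x) ⬝ᵥ 𝒜 *ᵥ (J *ᵥ x)
      = (J *ᵥ x) ⬝ᵥ (𝒜 * J) *ᵥ x := by rw [Matrix.mulVec_mulVec]
    _ = ((J *ᵥ x) ᵥ* (𝒜 * J)) ⬝ᵥ x := Matrix.dotProduct_mulVec _ _ _
    _ = ((x ᵥ* Jᵀ) ᵥ* (𝒜 * J)) ⬝ᵥ x := by rw [Matrix.vecMul_transpose]
    _ = (x ᵥ* (Jᵀ * (𝒜 * J))) ⬝ᵥ x := by rw [Matrix.vecMul_vecMul]
    _ = x ⬝ᵥ (Jᵀ * (𝒜 * J)) *ᵥ x := (Matrix.dotProduct_mulVec _ _ _).symm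
    _ = x ⬝ᵥ (Jᵀ * 𝒜 * J) *ᵥ x := by rw [Matrix.mul_assoc]

theorem stmt4 {n m : ℕ}
    (A : Matrix (Fin n) (Fin n) ℝ) (hA : A.PosDef)
    (𝒜 B Binv : Matrix (Fin m) (Fin m) ℝ)
    (Wt : Submodule ℝ (Fin m → ℝ))
    (P : Matrix (Fin n) (Fin m) ℝ) (J : Matrix (Fin m) (Fin n) ℝ)
    (hPI : P * J = 1)
    (hJrange : ∀ v : Fin n → ℝ, J.mulVec v ∈ Wt)
    (hstab : Jᵀ * 𝒜 * J = A)
    (α β c : ℝ) (hα : 0 < α) (hβ : 0 < β) (hc : 0 < c)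
    (h𝒜sym : 𝒜.IsSymm) (hBsym : B.IsSymm)
    (h𝒜pd : ∀ w ∈ Wt, w ≠ 0 → 0 < w ⬝ᵥ 𝒜.mulVec w)
    (hBpd : ∀ w ∈ Wt, w ≠ 0 → 0 < w ⬝ᵥ B.mulVec w)
    (hequiv1 : ∀ w ∈ Wt, α⁻¹ * (w ⬝ᵥ 𝒜.mulVec w) ≤ w ⬝ᵥ B.mulVec w)
    (hequiv2 : ∀ w ∈ Wt, w ⬝ᵥ B.mulVec w ≤ β * (w ⬝ᵥ 𝒜.mulVec w))
    (hcont : ∀ w ∈ Wt,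
      (P.mulVec w) ⬝ᵥ A.mulVec (P.mulVec w) ≤ c * (w ⬝ᵥ 𝒜.mulVec w))
    (hBinvSym : Binv.IsSymm)
    (hBinvRange : ∀ v : Fin m → ℝ, Binv.mulVec v ∈ Wt)
    (hBinv : ∀ w ∈ Wt, B.mulVec (Binv.mulVec w) = w) :
    ∀ v : Fin n → ℝ,
      v ⬝ᵥ ((P * Binv * Pᵀ)⁻¹).mulVec v ≤ β * (v ⬝ᵥ A.mulVec v) ∧
      v ⬝ᵥ A.mulVec v ≤ c * α * (v ⬝ᵥ ((P * Binv * Pᵀ)⁻¹).mulVec v) := by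
  have hBsym' : Bᵀ = B := hBsym
  have hBinvsym' : Binvᵀ = Binv := hBinvSym
  have hAsym : Aᵀ = A := by
    have := hA.1
    rwa [Matrix.IsHermitian, Matrix.conjTranspose_eq_transpose_of_trivial] at this
  set Minv := P * Binv * Pᵀ with hMinvdef
  have hMinvsym : Minvᵀ = Minv := by
    rw [hMinvdef, Matrix.transpose_mul, Matrix.transpose_mul, Matrix.transpose_transpose,
      hBinvsym', Matrix.mul_assoc]
  have hid := binv_left B Binv Wt hBinvRange hBinv
  have key : ∀ (g : Fin m → ℝ), ∀ x ∈ Wt, (B *ᵥ (Binv *ᵥ g)) ⬝ᵥ x = g ⬝ᵥ x := by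
    intro g x hx
    rw [← symm_dot hBsym' (Binv *ᵥ g) x, ← symm_dot hBinvsym' g (B *ᵥ x), hid x hx]
  have hdetA : IsUnit A.det := hA.det_pos.ne'.isUnit
  have hAinvv : ∀ v : Fin n → ℝ, A *ᵥ (A⁻¹ *ᵥ v) = v := by
    intro v
    rw [Matrix.mulVec_mulVec, Matrix.mul_nonsing_inv _ hdetA, Matrix.one_mulVec]
  have hApos : ∀ x : Fin n → ℝ, 0 ≤ x ⬝ᵥ A *ᵥ x := fun x => by
    have := hA.posSemidef.dotProduct_mulVec_nonneg x; simpa using this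
  have hAipos : ∀ x : Fin n → ℝ, 0 ≤ x ⬝ᵥ A⁻¹ *ᵥ x := fun x => by
    have := hA.inv.posSemidef.dotProduct_mulVec_nonneg x; simpa using this
  have hBpos : ∀ w ∈ Wt, 0 ≤ w ⬝ᵥ B *ᵥ w := by
    intro w hw
    rcases eq_or_ne w 0 with rfl | hne
    · simp
    · exact (hBpd w hw hne).le
  -- reduce v ⬝ᵥ Minv *ᵥ v
  have hquad : ∀ v : Fin n → ℝ, v ⬝ᵥ Minv *ᵥ v = (Pᵀ *ᵥ v) ⬝ᵥ (Binv *ᵥ (Pᵀ *ᵥ v)) := by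
    intro v
    rw [hMinvdef, ← Matrix.mulVec_mulVec, ← Matrix.mulVec_mulVec,
      Matrix.dotProduct_mulVec v P, ← Matrix.mulVec_transpose]
  have hdotP : ∀ (v : Fin n → ℝ) (x : Fin m → ℝ), v ⬝ᵥ (P *ᵥ x) = (Pᵀ *ᵥ v) ⬝ᵥ x := by
    intro v x
    rw [Matrix.dotProduct_mulVec v P, ← Matrix.mulVec_transpose]
  -- P1
  have P1 : ∀ v : Fin n → ℝ, v ⬝ᵥ Minv *ᵥ v ≤ (c * α) * (v ⬝ᵥ A⁻¹ *ᵥ v) := by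
    intro v
    set g := Pᵀ *ᵥ v with hg
    set w := Binv *ᵥ g with hwdef
    have hw : w ∈ Wt := hBinvRange g
    have e0 : v ⬝ᵥ Minv *ᵥ v = g ⬝ᵥ w := hquad v
    have e1 : g ⬝ᵥ w = w ⬝ᵥ B *ᵥ w := by
      rw [symm_dot hBsym' w w, key g w hw]
    have hgw_nonneg : 0 ≤ g ⬝ᵥ w := e1 ▸ hBpos w hw
    have cs := cs_sub hAsym ⊤ (fun x _ => hApos x) (a := A⁻¹ *ᵥ v) (b := P *ᵥ w)
      trivial trivial
    have ea : (A⁻¹ *ᵥ v) ⬝ᵥ A *ᵥ (P *ᵥ w) = g ⬝ᵥ w := by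
      rw [symm_dot hAsym, hAinvv v, hdotP]
    have eb : (A⁻¹ *ᵥ v) ⬝ᵥ A *ᵥ (A⁻¹ *ᵥ v) = v ⬝ᵥ A⁻¹ *ᵥ v := by
      rw [hAinvv v, dotProduct_comm]
    rw [ea, eb] at cs
    have hchain : (P *ᵥ w) ⬝ᵥ A *ᵥ (P *ᵥ w) ≤ (c * α) * (g ⬝ᵥ w) := by
      have h1 := hcont w hw
      have h2 := hequiv1 w hw
      have h3 : w ⬝ᵥ 𝒜 *ᵥ w ≤ α * (w ⬝ᵥ B *ᵥ w) := by
        have h4 := mul_le_mul_of_nonneg_left h2 hα.le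
        rwa [← mul_assoc, mul_inv_cancel₀ hα.ne', one_mul] at h4
      calc (P *ᵥ w) ⬝ᵥ A *ᵥ (P *ᵥ w) ≤ c * (w ⬝ᵥ 𝒜 *ᵥ w) := h1
        _ ≤ c * (α * (w ⬝ᵥ B *ᵥ w)) := by nlinarith
        _ = (c * α) * (g ⬝ᵥ w) := by rw [← e1]; ring
    rw [e0]
    rcases eq_or_lt_of_le hgw_nonneg with hz | hz
    · rw [← hz]
      exact mul_nonneg (by positivity) (hAipos v)
    · nlinarith [cs, hchain, hAipos v]
  -- P2
  have P2 : ∀ v : Fin n → ℝ, v ⬝ᵥ A⁻¹ *ᵥ v ≤ β * (v ⬝ᵥ Minv *ᵥ v) := by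
    intro v
    set g := Pᵀ *ᵥ v with hg
    set w := Binv *ᵥ g with hwdef
    have hw : w ∈ Wt := hBinvRange g
    have e0 : v ⬝ᵥ Minv *ᵥ v = g ⬝ᵥ w := hquad v
    have e1 : g ⬝ᵥ w = w ⬝ᵥ B *ᵥ w := by
      rw [symm_dot hBsym' w w, key g w hw]
    have hgw_nonneg : 0 ≤ g ⬝ᵥ w := e1 ▸ hBpos w hw
    set x := A⁻¹ *ᵥ v with hx
    set u0 := J *ᵥ x with hu0
    have hu0mem : u0 ∈ Wt := hJrange x
    have hPu0 : P *ᵥ u0 = x := by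
      rw [hu0, Matrix.mulVec_mulVec, hPI, Matrix.one_mulVec]
    have e2 : v ⬝ᵥ A⁻¹ *ᵥ v = g ⬝ᵥ u0 := by
      rw [← hx, ← hPu0, hdotP]
    have e3 : g ⬝ᵥ u0 = w ⬝ᵥ B *ᵥ u0 := by
      rw [symm_dot hBsym' w u0, key g u0 hu0mem]
    have e4 : u0 ⬝ᵥ 𝒜 *ᵥ u0 = v ⬝ᵥ A⁻¹ *ᵥ v := by
      have h5 := pullback J 𝒜 (A⁻¹ *ᵥ v)
      rw [hstab] at h5
      have h6 : (A⁻¹ *ᵥ v) ⬝ᵥ A *ᵥ (A⁻¹ *ᵥ v) = v ⬝ᵥ A⁻¹ *ᵥ v := by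
        rw [symm_dot hAsym, hAinvv v]
      rw [hu0, hx, h5, h6]
    have cs := cs_sub hBsym' Wt hBpos hw hu0mem
    have hu0B : u0 ⬝ᵥ B *ᵥ u0 ≤ β * (v ⬝ᵥ A⁻¹ *ᵥ v) := by
      rw [← e4]
      exact hequiv2 u0 hu0mem
    rcases eq_or_lt_of_le (hAipos v) with hz | hz
    · rw [← hz]
      have : 0 ≤ β * (v ⬝ᵥ Minv *ᵥ v) := by
        rw [e0]; positivity
      linarith
    · -- (v⬝A⁻¹v)² = (g⬝u0)² = (w⬝Bu0)² ≤ (w⬝Bw)(u0⬝Bu0)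
      have sq : (v ⬝ᵥ A⁻¹ *ᵥ v) ^ 2 ≤ (g ⬝ᵥ w) * (β * (v ⬝ᵥ A⁻¹ *ᵥ v)) := by
        calc (v ⬝ᵥ A⁻¹ *ᵥ v) ^ 2 = (w ⬝ᵥ B *ᵥ u0) ^ 2 := by rw [← e3, ← e2]
          _ ≤ (w ⬝ᵥ B *ᵥ w) * (u0 ⬝ᵥ B *ᵥ u0) := cs
          _ ≤ (g ⬝ᵥ w) * (β * (v ⬝ᵥ A⁻¹ *ᵥ v)) := by
              rw [← e1]
              have := hBpos u0 hu0mem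
              nlinarith [hgw_nonneg, hu0B]
      rw [e0]
      nlinarith [sq, hz]
  -- Minv is PosDef
  have hMinvPD : Minv.PosDef := by
    refine Matrix.PosDef.of_dotProduct_mulVec_pos ?_ ?_
    · rw [Matrix.IsHermitian, Matrix.conjTranspose_eq_transpose_of_trivial]
      exact hMinvsym
    · intro v hv
      have h1 : 0 < v ⬝ᵥ A⁻¹ *ᵥ v := hA.inv.dotProduct_mulVec_pos hv |>.trans_eq (by simp)
      have h2 := P2 v
      have : 0 < v ⬝ᵥ Minv *ᵥ v := by nlinarith
      simpa using this
  intro v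
  constructor
  · have h := inv_antitone hA.inv hMinvPD β hβ P2 v
    rwa [Matrix.nonsing_inv_nonsing_inv A hdetA] at h
  · have h := inv_antitone hMinvPD hA.inv (c * α) (by positivity) P1 v
    rwa [Matrix.nonsing_inv_nonsing_inv A hdetA] at h
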